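/- Let X be a set and k̃ : X × X → ℂ a positive definite kernel. Define k : X^m × X^m → ℂ^{m×m} by setting the (i,j)-entry of k(x,y) equal to k̃(x_i, y_j). Then k is a ℂ^{m×m}-valued positive definite kernel: k(x,y) = k(y,x)* for all x, y, and for all n, all c_1,…,c_n ∈ ℂ^{m×m} and x_1,…,x_n ∈ X^m, the matrix Σ_{s,t} c_s* k(x_s,x_t) c_t is positive semidefinite. -/

import Mathlib

open Matrix
open scoped ComplexOrder

private lemma sum_mulVec' {n m : ℕ} {ι : Type*} (s : Finset ι)
    (M : ι → Matrix (Fin n) (Fin m) ℂ) (v : Fin m → ℂ) :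
    (∑ i ∈ s, M i) *ᵥ v = ∑ i ∈ s, M i *ᵥ v := by
  ext k
  simp [mulVec, dotProduct, Matrix.sum_apply, Finset.sum_mul]
  rw [Finset.sum_comm]

private lemma dotProduct_sum' {k : ℕ} {ι : Type*} (v : Fin k → ℂ) (s : Finset ι)
    (f : ι → Fin k → ℂ) : v ⬝ᵥ (∑ i ∈ s, f i) = ∑ i ∈ s, v ⬝ᵥ f i := by
  simp [dotProduct, Finset.mul_sum]
  rw [Finset.sum_comm]

/-- If `k̃` is a ℂ-valued positive definite kernel on `X`, then the `ℂ^{m×m}`-valued kernel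
`k(x,y)_{i,j} = k̃(x_i, y_j)` on `X^m` is positive definite: it is Hermitian-symmetric and
`Σ_{s,t} c_s* k(x_s,x_t) c_t` is positive semidefinite for all finite families. -/
theorem matrix_kernel_posdef
    {X : Type*} (m : ℕ) (ktilde : X → X → ℂ)
    (hherm : ∀ x y, ktilde x y = (starRingEnd ℂ) (ktilde y x))
    (hpos : ∀ (n : ℕ) (c : Fin n → ℂ) (x : Fin n → X),
      0 ≤ ∑ s, ∑ t, (starRingEnd ℂ) (c s) * c t * ktilde (x s) (x t)) :
    (∀ x y : Fin m → X,
      (Matrix.of fun i j => ktilde (x i) (y j)) =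
        (Matrix.of fun i j => ktilde (y i) (x j))ᴴ) ∧
    (∀ (n : ℕ) (c : Fin n → Matrix (Fin m) (Fin m) ℂ) (x : Fin n → (Fin m → X)),
      (∑ s, ∑ t,
        (c s)ᴴ * (Matrix.of fun i j => ktilde (x s i) (x t j)) * c t).PosSemidef) := by
  have hKH : ∀ (x y : Fin m → X),
      (Matrix.of fun i j => ktilde (x i) (y j))ᴴ = Matrix.of fun i j => ktilde (y i) (x j) := by
    intro x y
    ext i j
    simp only [conjTranspose_apply, of_apply]
    rw [hherm (y i) (x j)]; rfl
  constructor
  · intro x y; rw [hKH]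
  · intro n c x
    rw [posSemidef_iff_dotProduct_mulVec]
    constructor
    · -- Hermitian
      show _ᴴ = _
      rw [conjTranspose_sum, Finset.sum_comm]
      refine Finset.sum_congr rfl fun t _ => ?_
      rw [conjTranspose_sum]
      refine Finset.sum_congr rfl fun s _ => ?_
      rw [conjTranspose_mul, conjTranspose_mul, conjTranspose_conjTranspose, hKH, mul_assoc]
    · intro v
      set d : Fin n → Fin m → ℂ := fun s => c s *ᵥ v with hd
      have key : star v ⬝ᵥ ((∑ s, ∑ t,
          (c s)ᴴ * (Matrix.of fun i j => ktilde (x s i) (x t j)) * c t) *ᵥ v)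
          = ∑ s, ∑ i, ∑ t, ∑ j,
            (starRingEnd ℂ) (d s i) * (d t j) * ktilde (x s i) (x t j) := by
        rw [sum_mulVec', dotProduct_sum']
        refine Finset.sum_congr rfl fun s _ => ?_
        rw [sum_mulVec', dotProduct_sum', Finset.sum_comm]
        refine Finset.sum_congr rfl fun t _ => ?_
        rw [← mulVec_mulVec, ← mulVec_mulVec, dotProduct_mulVec, ← star_mulVec]
        simp only [dotProduct, mulVec, Pi.star_apply, of_apply, Finset.mul_sum, hd,
          starRingEnd_apply]
        refine Finset.sum_congr rfl fun i _ => Finset.sum_congr rfl fun j _ => ?_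
        rw [Finset.sum_mul]
        refine Finset.sum_congr rfl fun a _ => ?_
        ring
      rw [key]
      have h := hpos (n * m)
        (fun p => d (finProdFinEquiv.symm p).1 (finProdFinEquiv.symm p).2)
        (fun p => x (finProdFinEquiv.symm p).1 (finProdFinEquiv.symm p).2)
      refine le_of_le_of_eq h ?_
      rw [← Equiv.sum_comp (finProdFinEquiv : Fin n × Fin m ≃ Fin (n * m))]
      rw [Fintype.sum_prod_type]
      refine Finset.sum_congr rfl fun s _ => Finset.sum_congr rfl fun i _ => ?_
      rw [← Equiv.sum_comp (finProdFinEquiv : Fin n × Fin m ≃ Fin (n * m))]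
      rw [Fintype.sum_prod_type]
      simp [Equiv.symm_apply_apply]
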